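/- arXiv:1509.01099 — 2 statements merged into one kernel-verified Lean document; each statement's English description precedes it below -/
import Mathlib

section
/- Gale–Stewart theorem: For any set X of moves and any open set A ⊆ X^ω (in the product topology where X is discrete), the two-player perfect-information game of length ω with payoff set A (player I wins iff the resulting play lies in A) is determined: one of the two players has a winning strategy. -/
universe u

/-- The first `n` moves of the play `a`, as a finite position. -/
def prefixOf {X : Type u} (a : ℕ → X) (n : ℕ) : List X :=
  List.ofFn (fun i : Fin n => a i)

/-- The play `a` follows the strategy `σ` for player I, who moves at even stages. -/
def FollowsI {X : Type u} (σ : List X → X) (a : ℕ → X) : Prop :=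
  ∀ n, Even n → a n = σ (prefixOf a n)

/-- The play `a` follows the strategy `τ` for player II, who moves at odd stages. -/
def FollowsII {X : Type u} (τ : List X → X) (a : ℕ → X) : Prop :=
  ∀ n, Odd n → a n = τ (prefixOf a n)

/-- `σ` is a winning strategy for player I in the game with payoff set `A`. -/
def WinningI {X : Type u} (A : Set (ℕ → X)) (σ : List X → X) : Prop :=
  ∀ a, FollowsI σ a → a ∈ A

/-- `τ` is a winning strategy for player II in the game with payoff set `A`. -/
def WinningII {X : Type u} (A : Set (ℕ → X)) (τ : List X → X) : Prop :=
  ∀ a, FollowsII τ a → a ∉ A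

/-- The game with payoff set `A` is determined. -/
def Determined {X : Type u} (A : Set (ℕ → X)) : Prop :=
  (∃ σ, WinningI A σ) ∨ (∃ τ, WinningII A τ)

/-- `A` is open: every play in `A` has a finite initial segment all of whose
extensions lie in `A`. -/
def IsOpenPayoff {X : Type u} (A : Set (ℕ → X)) : Prop :=
  ∀ a ∈ A, ∃ n : ℕ, ∀ b : ℕ → X, (∀ i < n, b i = a i) → b ∈ A

/-- The play `a` extends the finite position `p`. -/
def Extends {X : Type u} (p : List X) (a : ℕ → X) : Prop :=
  prefixOf a p.length = p

/-- `σ` is a winning strategy for player I in the game with payoff `A`, proceeding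
from position `p`. -/
def WinningFromI {X : Type u} (A : Set (ℕ → X)) (p : List X) (σ : List X → X) : Prop :=
  ∀ a : ℕ → X, Extends p a →
    (∀ n, p.length ≤ n → Even n → a n = σ (prefixOf a n)) → a ∈ A

/-- `τ` is a winning strategy for player II in the game with payoff `A`, proceeding
from position `p`. -/
def WinningFromII {X : Type u} (A : Set (ℕ → X)) (p : List X) (τ : List X → X) : Prop :=
  ∀ a : ℕ → X, Extends p a →
    (∀ n, p.length ≤ n → Odd n → a n = τ (prefixOf a n)) → a ∉ A

namespace GaleStewartAux

variable {X : Type u} [Nonempty X]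

lemma length_prefixOf (a : ℕ → X) (n : ℕ) : (prefixOf a n).length = n := by
  simp [prefixOf]

lemma prefixOf_succ (a : ℕ → X) (n : ℕ) :
    prefixOf a (n + 1) = prefixOf a n ++ [a n] := by
  rw [prefixOf, List.ofFn_succ', List.concat_eq_append]
  simp [prefixOf]

lemma getElem_prefixOf (a : ℕ → X) (n i : ℕ) (h : i < n) :
    (prefixOf a n)[i]'(by simpa [prefixOf] using h) = a i := by
  simp [prefixOf]

lemma extends_prefixOf (a : ℕ → X) (n : ℕ) : Extends (prefixOf a n) a := by
  simp [Extends, length_prefixOf]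

/-- `W A p` : player I has a winning strategy proceeding from `p`. -/
def W (A : Set (ℕ → X)) (p : List X) : Prop := ∃ σ, WinningFromI A p σ

/-- If it is I's turn at `p` and I wins after playing `x`, then I wins from `p`. -/
lemma claim1 (A : Set (ℕ → X)) (p : List X) (hp : Even p.length) (x : X)
    (h : W A (p ++ [x])) : W A p := by
  classical
  obtain ⟨σ, hσ⟩ := h
  refine ⟨fun q => if q = p then x else σ q, ?_⟩
  intro a ha hfol
  have hx : a p.length = x := by
    have h1 := hfol p.length le_rfl hp
    rw [ha] at h1
    simpa using h1
  apply hσ a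
  · show prefixOf a (p ++ [x]).length = p ++ [x]
    rw [List.length_append, List.length_singleton, prefixOf_succ, ha, hx]
  · intro n hn he
    have hn' : p.length + 1 ≤ n := by simpa using hn
    have h1 := hfol n (Nat.le_of_succ_le hn') he
    have hne : prefixOf a n ≠ p := by
      intro hq
      have : n = p.length := by rw [← length_prefixOf a n, hq]
      omega
    rw [h1]
    simp [hne]

/-- If it is II's turn at `p` and I wins after every move of II, then I wins from `p`. -/
lemma claim2 (A : Set (ℕ → X)) (p : List X) (hp : Odd p.length)
    (h : ∀ x : X, W A (p ++ [x])) : W A p := by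
  classical
  refine ⟨fun q => if hq : p.length < q.length then
    Classical.choose (h (q[p.length]'hq)) q else Classical.arbitrary X, ?_⟩
  intro a ha hfol
  set x := a p.length with hx
  have hlen : (p ++ [x]).length = p.length + 1 := by simp
  have key : ∀ n, p.length < n → Even n →
      a n = Classical.choose (h x) (prefixOf a n) := by
    intro n hn he
    have h1 := hfol n (Nat.le_of_lt hn) he
    have hlt : p.length < (prefixOf a n).length := by rwa [length_prefixOf]
    simp only [dif_pos hlt] at h1
    have hget : (prefixOf a n)[p.length]'hlt = x := getElem_prefixOf a n p.length hn
    rw [h1, hget]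
  apply Classical.choose_spec (h x) a
  · show prefixOf a (p ++ [x]).length = p ++ [x]
    rw [hlen, prefixOf_succ, ha]
  · intro n hn he
    rw [hlen] at hn
    exact key n (by omega) he

end GaleStewartAux

open GaleStewartAux in
/-- Gale–Stewart theorem: every game with an open payoff set is determined. -/
theorem gale_stewart {X : Type u} [Nonempty X] (A : Set (ℕ → X))
    (hA : IsOpenPayoff A) : Determined A := by
  classical
  by_cases h0 : W A ([] : List X)
  · obtain ⟨σ, hσ⟩ := h0
    exact Or.inl ⟨σ, fun a hfa => hσ a rfl (fun n _ he => hfa n he)⟩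
  · set τ : List X → X := fun p =>
      if h : ∃ x : X, ¬ W A (p ++ [x]) then Classical.choose h
      else Classical.arbitrary X with hτ
    refine Or.inr ⟨τ, ?_⟩
    intro a hfa haA
    have key : ∀ n, ¬ W A (prefixOf a n) := by
      intro n
      induction n with
      | zero => simpa [prefixOf] using h0
      | succ n ih =>
        rw [prefixOf_succ]
        rcases Nat.even_or_odd n with he | ho
        · intro hw
          exact ih (claim1 A _ (by rwa [length_prefixOf]) (a n) hw)
        · have hex : ∃ x : X, ¬ W A (prefixOf a n ++ [x]) := by
            by_contra hc
            push_neg at hc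
            exact ih (claim2 A _ (by rwa [length_prefixOf]) hc)
          have han : a n = Classical.choose hex := by
            rw [hfa n ho, hτ]
            simp only [dif_pos hex]
          rw [han]
          exact Classical.choose_spec hex
    obtain ⟨n, hn⟩ := hA a haA
    apply key n
    refine ⟨fun _ => Classical.arbitrary X, fun b hb _ => hn b ?_⟩
    rw [Extends, length_prefixOf] at hb
    simp only [prefixOf, List.ofFn_inj] at hb
    intro i hi
    exact congrFun hb ⟨i, hi⟩
end

section
/- In a game open for player I with payoff A ⊆ X^ω, if a position p has no ordinal game value, then player II has a winning strategy from position p. -/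
universe u

/-- Auxiliary rank assignment for the ordinal game values of a game that is open
for player I (who moves at even stages): value `0` if every play extending the
position lies in `A`; at the open player's turn, `α + 1` whenever some move leads
to a position of rank `α`; at the closed player's turn, the supremum of ranks of
all one-move extensions, provided they are all defined. -/
inductive GameRank {X : Type u} (A : Set (ℕ → X)) : List X → Ordinal.{u} → Prop
  | zero (p : List X) (h : ∀ a : ℕ → X, Extends p a → a ∈ A) : GameRank A p 0
  | succ (p : List X) (α : Ordinal.{u}) (hturn : Even p.length) (x : X)
      (h : GameRank A (p ++ [x]) α) : GameRank A p (α + 1)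
  | sup (p : List X) (hturn : Odd p.length) (f : X → Ordinal.{u})
      (h : ∀ y : X, GameRank A (p ++ [y]) (f y)) : GameRank A p (⨆ y : X, f y)

/-- The position `p` has ordinal game value `α`: the least ordinal assigned to `p`
by the inductive rank assignment (so that at the open player's turn the minimal
witnessing move is taken). -/
def GameValue {X : Type u} (A : Set (ℕ → X)) (p : List X) (α : Ordinal.{u}) : Prop :=
  GameRank A p α ∧ ∀ β : Ordinal.{u}, GameRank A p β → α ≤ β

/-- A position has no rank. -/
def Unranked {X : Type u} (A : Set (ℕ → X)) (p : List X) : Prop :=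
  ∀ α : Ordinal.{u}, ¬ GameRank A p α

lemma unranked_of_no_gameValue {X : Type u} (A : Set (ℕ → X)) (p : List X)
    (h : ∀ α : Ordinal.{u}, ¬ GameValue A p α) : Unranked A p := by
  intro γ hγ
  obtain ⟨α, hα, hmin⟩ := wellFounded_lt.has_min {β : Ordinal.{u} | GameRank A p β} ⟨γ, hγ⟩
  exact h α ⟨hα, fun β hβ => not_lt.mp (hmin β hβ)⟩

lemma unranked_even {X : Type u} (A : Set (ℕ → X)) (p : List X)
    (hp : Unranked A p) (hturn : Even p.length) (x : X) : Unranked A (p ++ [x]) := by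
  intro α hα
  exact hp (α + 1) (GameRank.succ p α hturn x hα)

lemma unranked_odd {X : Type u} (A : Set (ℕ → X)) (p : List X)
    (hp : Unranked A p) (hturn : Odd p.length) : ∃ y : X, Unranked A (p ++ [y]) := by
  by_contra hc
  push_neg at hc
  have hall : ∀ y : X, ∃ α : Ordinal.{u}, GameRank A (p ++ [y]) α := by
    intro y
    by_contra hy
    push_neg at hy
    exact hc y (fun α => hy α)
  choose f hf using hall
  exact hp _ (GameRank.sup p hturn f hf)

lemma prefixOf_succ {X : Type u} (a : ℕ → X) (n : ℕ) :
    prefixOf a (n + 1) = prefixOf a n ++ [a n] := by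
  rw [prefixOf, prefixOf, List.ofFn_succ']
  simp [List.concat_eq_append, Fin.last]

lemma prefixOf_length {X : Type u} (a : ℕ → X) (n : ℕ) :
    (prefixOf a n).length = n := by simp [prefixOf]

/-- In a game open for player I, if a position has no ordinal game value, then
player II has a winning strategy from that position. -/
theorem winningII_of_no_gameValue {X : Type u} [Nonempty X] (A : Set (ℕ → X))
    (hA : IsOpenPayoff A) (p : List X) (h : ∀ α : Ordinal.{u}, ¬ GameValue A p α) :
    ∃ τ : List X → X, WinningFromII A p τ := by
  have hp : Unranked A p := unranked_of_no_gameValue A p h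
  classical
  refine ⟨fun q => if hq : Odd q.length ∧ Unranked A q then
      Classical.choose (unranked_odd A q hq.2 hq.1) else Classical.arbitrary X, ?_⟩
  intro a hext hfol hmem
  set τ : List X → X := fun q => if hq : Odd q.length ∧ Unranked A q then
      Classical.choose (unranked_odd A q hq.2 hq.1) else Classical.arbitrary X with hτ
  -- every prefix of a of length ≥ p.length is unranked
  have key : ∀ n, p.length ≤ n → Unranked A (prefixOf a n) := by
    intro n hn
    induction n with
    | zero =>
      have : p.length = 0 := Nat.le_zero.mp hn
      have hp0 : p = [] := List.length_eq_zero_iff.mp this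
      have : prefixOf a 0 = p := by simp [prefixOf, hp0]
      rw [this]; exact hp
    | succ n ih =>
      rcases Nat.lt_or_ge p.length (n + 1) with hlt | hge
      · have hn' : p.length ≤ n := Nat.lt_succ_iff.mp hlt
        have hun : Unranked A (prefixOf a n) := ih hn'
        rw [prefixOf_succ]
        rcases Nat.even_or_odd n with he | ho
        · exact unranked_even A _ hun (by rw [prefixOf_length]; exact he) (a n)
        · have han : a n = τ (prefixOf a n) := hfol n hn' ho
          have hcond : Odd (prefixOf a n).length ∧ Unranked A (prefixOf a n) := by
            rw [prefixOf_length]; exact ⟨ho, hun⟩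
          have : a n = Classical.choose (unranked_odd A (prefixOf a n) hcond.2 hcond.1) := by
            rw [han, hτ]; simp [hcond]
          rw [this]
          exact Classical.choose_spec (unranked_odd A (prefixOf a n) hcond.2 hcond.1)
      · have : p.length = n + 1 := le_antisymm hn hge
        have : prefixOf a (n + 1) = p := by rw [← this]; exact hext
        rw [this]; exact hp
  -- openness: a ∈ A gives a prefix all of whose extensions are in A
  obtain ⟨n, hb⟩ := hA a hmem
  set m := max n p.length with hm
  have hun : Unranked A (prefixOf a m) := key m (le_max_right _ _)
  apply hun 0
  apply GameRank.zero
  intro b hbext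
  apply hb
  intro i hi
  have hext' : prefixOf b m = prefixOf a m := by
    have := hbext
    rwa [Extends, prefixOf_length] at this
  have him : i < m := lt_of_lt_of_le hi (le_max_left _ _)
  have hfun : (fun i : Fin m => b i) = fun i : Fin m => a i :=
    List.ofFn_inj.mp hext'
  exact congrFun hfun ⟨i, him⟩
end
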